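/- Let n ≥ 1, k ≥ 1. The symmetric game subspace 𝒮_{[n;k]}, i.e., the linear subspace of all tuples (c_1, ..., c_n) of payoff functions c_i : (Fin n → Fin k) → ℝ satisfying c_i(x) = c_{σ(i)}(x ∘ σ⁻¹) for every permutation σ of Fin n, every i, and every strategy profile x, has dimension k · C(k+n−2, n−1) over ℝ. -/

import Mathlib

/-- The symmetric game subspace 𝒮_{[n;k]}: the subspace of all tuples of payoff
functions c_i : (Fin n → Fin k) → ℝ with c_i(x) = c_{σ(i)}(x ∘ σ⁻¹) for every
permutation σ, every player i and every strategy profile x. -/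
def symGameSubspace (n k : ℕ) : Submodule ℝ (Fin n → (Fin n → Fin k) → ℝ) where
  carrier := { c | ∀ (σ : Equiv.Perm (Fin n)) (i : Fin n) (x : Fin n → Fin k),
    c i x = c (σ i) (fun j => x (σ⁻¹ j)) }
  add_mem' := by
    intro c d hc hd σ i x
    simp only [Pi.add_apply, hc σ i x, hd σ i x]
  zero_mem' := by intro σ i x; rfl
  smul_mem' := by
    intro a c hc σ i x
    simp only [Pi.smul_apply, hc σ i x]

private def mOf {n k : ℕ} (i : Fin n) (x : Fin n → Fin k) : Multiset (Fin k) :=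
  (Finset.univ.erase i).val.map x

private lemma mOf_card {n k : ℕ} (i : Fin n) (x : Fin n → Fin k) :
    Multiset.card (mOf i x) = n - 1 := by
  simp [mOf, Finset.card_erase_of_mem]

private lemma mOf_perm {n k : ℕ} (σ : Equiv.Perm (Fin n)) (i : Fin n) (x : Fin n → Fin k) :
    mOf (σ i) (fun j => x (σ⁻¹ j)) = mOf i x := by
  unfold mOf
  have h : (Finset.univ.erase (σ i)).val.map (σ⁻¹ : Equiv.Perm (Fin n)) =
      (Finset.univ.erase i).val := by
    have h2 := Finset.map_erase (σ⁻¹ : Equiv.Perm (Fin n)).toEmbedding Finset.univ (σ i)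
    rw [Finset.map_univ_equiv] at h2
    simp only [Equiv.coe_toEmbedding, (by exact σ.symm_apply_apply i : σ⁻¹ (σ i) = i)] at h2
    have h3 := congrArg Finset.val h2
    rw [Finset.map_val] at h3
    simpa only [Equiv.coe_toEmbedding, Equiv.Perm.inv_def, Equiv.symm_apply_apply] using h3
  rw [show (fun j => x (σ⁻¹ j)) = x ∘ (σ⁻¹ : Equiv.Perm (Fin n)) from rfl,
    ← Multiset.map_map, h]

private lemma exists_bijOn_of_map_eq {ι α : Type*} [DecidableEq ι] [DecidableEq α] :
    ∀ (N : ℕ) (A B : Finset ι) (f g : ι → α), A.card = N → A.val.map f = B.val.map g →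
    ∃ e : ι → ι, Set.BijOn e ↑A ↑B ∧ ∀ a ∈ A, g (e a) = f a := by
  intro N
  induction N with
  | zero =>
    intro A B f g hA h
    have hA0 : A = ∅ := Finset.card_eq_zero.mp hA
    subst hA0
    have hB : B.val.map g = 0 := by simpa using h.symm
    have hB0 : B = ∅ := by
      have := Multiset.card_eq_zero.mp (by rw [hB]; simp : Multiset.card (B.val.map g) = 0)
      simp at this
      exact Finset.card_eq_zero.mp (by simpa using this)
    subst hB0
    exact ⟨id, by simp [Set.BijOn], by simp⟩
  | succ N ih =>
    intro A B f g hA h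
    have hApos : A.Nonempty := Finset.card_pos.mp (by omega)
    obtain ⟨a, ha⟩ := hApos
    have hfa : f a ∈ B.val.map g := by
      rw [← h]; exact Multiset.mem_map_of_mem f (by simpa using ha)
    obtain ⟨b, hb, hgb⟩ := Multiset.mem_map.mp hfa
    have hbB : b ∈ B := hb
    have key : (A.erase a).val.map f = (B.erase b).val.map g := by
      have hAv : A.val = a ::ₘ (A.erase a).val := by
        rw [Finset.erase_val, Multiset.cons_erase (by simpa using ha)]
      have hBv : B.val = b ::ₘ (B.erase b).val := by
        rw [Finset.erase_val, Multiset.cons_erase (by simpa using hbB)]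
      rw [hAv, hBv, Multiset.map_cons, Multiset.map_cons, hgb] at h
      exact (Multiset.cons_inj_right _).mp h
    obtain ⟨e, he, hev⟩ := ih (A.erase a) (B.erase b) f g
      (by rw [Finset.card_erase_of_mem ha, hA]; omega) key
    have memA' : ∀ z, z ≠ a → z ∈ A → z ∈ (↑(A.erase a) : Set ι) :=
      fun z h1 h2 => Finset.mem_coe.mpr (Finset.mem_erase.mpr ⟨h1, h2⟩)
    refine ⟨fun z => if z = a then b else e z, ⟨?_, ?_, ?_⟩, ?_⟩
    · intro z hz
      have hzA : z ∈ A := Finset.mem_coe.mp hz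
      by_cases hza : z = a
      · simpa [hza] using hbB
      · have h1 := he.mapsTo (memA' z hza hzA)
        have h2 := Finset.mem_erase.mp (Finset.mem_coe.mp h1)
        simpa [hza] using h2.2
    · intro z hz w hw hzw
      have hzA : z ∈ A := Finset.mem_coe.mp hz
      have hwA : w ∈ A := Finset.mem_coe.mp hw
      simp only at hzw
      by_cases hza : z = a <;> by_cases hwa : w = a
      · rw [hza, hwa]
      · exfalso
        have h1 := Finset.mem_erase.mp (Finset.mem_coe.mp (he.mapsTo (memA' w hwa hwA)))
        rw [if_pos hza, if_neg hwa] at hzw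
        exact h1.1 hzw.symm
      · exfalso
        have h1 := Finset.mem_erase.mp (Finset.mem_coe.mp (he.mapsTo (memA' z hza hzA)))
        rw [if_neg hza, if_pos hwa] at hzw
        exact h1.1 hzw
      · rw [if_neg hza, if_neg hwa] at hzw
        exact he.injOn (memA' z hza hzA) (memA' w hwa hwA) hzw
    · intro b' hb'
      have hb'B : b' ∈ B := Finset.mem_coe.mp hb'
      by_cases hb'b : b' = b
      · exact ⟨a, Finset.mem_coe.mpr ha, by simp [hb'b]⟩
      · obtain ⟨z, hz, hez⟩ := he.surjOn
          (Finset.mem_coe.mpr (Finset.mem_erase.mpr ⟨hb'b, hb'B⟩))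
        have hz' := Finset.mem_erase.mp (Finset.mem_coe.mp hz)
        exact ⟨z, Finset.mem_coe.mpr hz'.2, by simp [hz'.1, hez]⟩
    · intro z hz
      by_cases hza : z = a
      · simp [hza, hgb]
      · simpa [hza] using hev z (Finset.mem_erase.mpr ⟨hza, hz⟩)

private lemma symm_apply_eq' {n k : ℕ} {c : Fin n → (Fin n → Fin k) → ℝ}
    (hc : c ∈ symGameSubspace n k) {i i' : Fin n} {x y : Fin n → Fin k}
    (h1 : x i = y i') (h2 : mOf i x = mOf i' y) : c i x = c i' y := by
  classical
  obtain ⟨e, he, hev⟩ := exists_bijOn_of_map_eq (Finset.univ.erase i).card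
    (Finset.univ.erase i) (Finset.univ.erase i') x y rfl h2
  set E : Fin n → Fin n := fun z => if z = i then i' else e z with hE
  have hmem : ∀ z : Fin n, z ≠ i → e z ≠ i' := by
    intro z hz
    have h1 := he.mapsTo (Finset.mem_coe.mpr (Finset.mem_erase.mpr ⟨hz, Finset.mem_univ z⟩))
    exact (Finset.mem_erase.mp (Finset.mem_coe.mp h1)).1
  have hbij : Function.Bijective E := by
    constructor
    · intro z w hzw
      simp only [hE] at hzw
      by_cases hza : z = i <;> by_cases hwa : w = i
      · rw [hza, hwa]
      · exfalso; rw [if_pos hza, if_neg hwa] at hzw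
        exact hmem w hwa hzw.symm
      · exfalso; rw [if_neg hza, if_pos hwa] at hzw
        exact hmem z hza hzw
      · rw [if_neg hza, if_neg hwa] at hzw
        exact he.injOn (Finset.mem_coe.mpr (Finset.mem_erase.mpr ⟨hza, Finset.mem_univ z⟩))
          (Finset.mem_coe.mpr (Finset.mem_erase.mpr ⟨hwa, Finset.mem_univ w⟩)) hzw
    · intro j
      by_cases hj : j = i'
      · exact ⟨i, by simp [hE, hj]⟩
      · obtain ⟨z, hz, hez⟩ := he.surjOn
          (Finset.mem_coe.mpr (Finset.mem_erase.mpr ⟨hj, Finset.mem_univ j⟩))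
        have hzi : z ≠ i := (Finset.mem_erase.mp (Finset.mem_coe.mp hz)).1
        exact ⟨z, by simp [hE, hzi, hez]⟩
  let σ : Equiv.Perm (Fin n) := Equiv.ofBijective E hbij
  have hσ : ∀ z, σ z = E z := fun z => rfl
  have hxy : ∀ z, x z = y (σ z) := by
    intro z
    by_cases hz : z = i
    · rw [hz, hσ]; simp only [hE, if_pos rfl]; exact h1
    · rw [hσ]; simp only [hE, if_neg hz]
      exact (hev z (Finset.mem_erase.mpr ⟨hz, Finset.mem_univ z⟩)).symm
  have hσi : σ i = i' := by rw [hσ]; simp [hE]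
  have := hc σ i x
  rw [this, hσi]
  congr 1
  funext j
  rw [hxy (σ⁻¹ j)]
  congr 1
  exact Equiv.apply_symm_apply σ j

private lemma map_univ_eq_ofFn {m : ℕ} {α : Type*} (f : Fin m → α) :
    Multiset.map f Finset.univ.val = (List.ofFn f : List α) := by
  have : (Finset.univ.val : Multiset (Fin m)) = (List.finRange m : List (Fin m)) := rfl
  rw [this]
  rw [show (Multiset.map f (List.finRange m : List (Fin m))) =
    ((List.finRange m).map f : List α) from rfl]
  rw [← List.ofFn_eq_map]

private lemma mOf_zero_cons {m k : ℕ} (a : Fin k) (f : Fin m → Fin k) :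
    mOf (0 : Fin (m+1)) (Fin.cons a f) = Multiset.map f Finset.univ.val := by
  unfold mOf
  have h : (Finset.univ.erase (0 : Fin (m+1))) =
      Finset.univ.map ⟨Fin.succ, Fin.succ_injective m⟩ := by
    rw [Fin.univ_succ]
    rw [Finset.erase_cons]
  rw [h, Finset.map_val, Multiset.map_map]
  exact congrArg (fun g => Multiset.map g Finset.univ.val) (funext fun j => by simp)

private lemma exists_rep {m k : ℕ} (a : Fin k) (s : Multiset (Fin k))
    (hs : Multiset.card s = m) :
    ∃ x : Fin (m+1) → Fin k, x 0 = a ∧ mOf 0 x = s := by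
  classical
  set l := s.toList with hl
  have hlen : l.length = m := by rw [hl, Multiset.length_toList, hs]
  refine ⟨Fin.cons a (fun j : Fin m => l.get ⟨j, by omega⟩), Fin.cons_zero _ _, ?_⟩
  rw [mOf_zero_cons, map_univ_eq_ofFn]
  have : List.ofFn (fun j : Fin m => l.get ⟨j, by omega⟩) = l := by
    apply List.ext_getElem
    · simp [hlen]
    · intro i h1 h2
      simp [List.getElem_ofFn]
  rw [this, hl, Multiset.coe_toList]

private theorem aux_dim (m k : ℕ) :
    Module.finrank ℝ (symGameSubspace (m+1) k) = k * (k + m - 1).choose m := by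
  classical
  have hcard : ∀ (i : Fin (m+1)) (x : Fin (m+1) → Fin k),
      Multiset.card (mOf i x) = m := fun i x => by rw [mOf_card]; omega
  let sOf : Fin (m+1) → (Fin (m+1) → Fin k) → Sym (Fin k) m :=
    fun i x => ⟨mOf i x, hcard i x⟩
  have sOf_perm : ∀ (σ : Equiv.Perm (Fin (m+1))) (i : Fin (m+1)) (x : Fin (m+1) → Fin k),
      sOf (σ i) (fun j => x (σ⁻¹ j)) = sOf i x :=
    fun σ i x => Subtype.ext (mOf_perm σ i x)
  let Ψ : ((Fin k × Sym (Fin k) m) → ℝ) →ₗ[ℝ] symGameSubspace (m+1) k :=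
    { toFun := fun f => ⟨fun i x => f (x i, sOf i x), by
        intro σ i x
        show f (x i, sOf i x) = f (x (σ⁻¹ (σ i)), sOf (σ i) (fun j => x (σ⁻¹ j)))
        rw [sOf_perm σ i x, (by exact σ.symm_apply_apply i : σ⁻¹ (σ i) = i)]⟩
      map_add' := fun f g => rfl
      map_smul' := fun r f => rfl }
  have hbij : Function.Bijective Ψ := by
    constructor
    · intro f g hfg
      funext p
      obtain ⟨a, s⟩ := p
      obtain ⟨x, hx0, hxm⟩ := exists_rep a s.1 s.2
      have hval := congrFun (congrFun (congrArg Subtype.val hfg) 0) x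
      have hs : sOf 0 x = s := Subtype.ext hxm
      show f (a, s) = g (a, s)
      rw [← hx0, ← hs]
      exact hval
    · rintro ⟨c, hc⟩
      refine ⟨fun p => c 0 (exists_rep p.1 p.2.1 p.2.2).choose, ?_⟩
      apply Subtype.ext
      funext i x
      show c 0 _ = c i x
      obtain ⟨h0, hm⟩ := (exists_rep (x i) (sOf i x).1 (sOf i x).2).choose_spec
      exact (symm_apply_eq' hc h0.symm hm.symm).symm
  have heq := (LinearEquiv.ofBijective Ψ hbij).finrank_eq
  rw [← heq, Module.finrank_fintype_fun_eq_card, Fintype.card_prod, Fintype.card_fin,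
    Sym.card_sym_eq_choose, Fintype.card_fin]

/-- for n, k ≥ 1 the symmetric game subspace 𝒮_{[n;k]} has dimension
k · C(k+n−2, n−1) over ℝ. -/
theorem dim_symGameSubspace (n k : ℕ) (hn : 1 ≤ n) (hk : 1 ≤ k) :
    Module.finrank ℝ (symGameSubspace n k) = k * (k + n - 2).choose (n - 1) := by
  obtain ⟨m, rfl⟩ : ∃ m, n = m + 1 := ⟨n - 1, (Nat.succ_pred_eq_of_pos hn).symm⟩
  have h1 : k + (m + 1) - 2 = k + m - 1 := by omega
  have h2 : m + 1 - 1 = m := rfl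
  rw [h1, h2]
  exact aux_dim m k
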